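/- Let X be a Banach space, f : X → ℝ ∪ {+∞} lower semicontinuous, −∞ < α < β ≤ +∞, and φ : [0, β−α) → [0,∞) continuous, φ(0)=0, C¹ with φ' > 0 on (0, β−α). If φ'(f(x) − α) · |∇f|(x) ≥ 1 for all x with α < f(x) < β, then φ(f(x) − α) ≥ dist(x, {f ≤ α}) for all x with α < f(x) < β. -/

import Mathlib

open Topology Filter
open scoped ENNReal

-- The strong slope: `0` at local minimizers, otherwise
-- `limsup_{y→x} (f(x) − f(y))₊ / ‖x − y‖`, with values in `ℝ≥0∞`.
open Classical in
noncomputable def strongSlope {X : Type*} [NormedAddCommGroup X]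
    (f : X → EReal) (x : X) : ℝ≥0∞ :=
  if IsLocalMin f x then 0
  else Filter.limsup (fun y => ENNReal.ofReal ((f x - f y).toReal / dist x y)) (𝓝[≠] x)

private lemma ereal_toReal_nonpos' {x : EReal} (h : x ≤ 0) : x.toReal ≤ 0 := by
  induction x using EReal.rec with
  | bot => simp
  | coe t => simp only [EReal.toReal_coe]; exact_mod_cast h
  | top => simp at h

theorem ekeland_enn {Y : Type*} [EMetricSpace Y] [CompleteSpace Y]
    (g : Y → ℝ≥0∞) (hg : LowerSemicontinuous g) (x₀ : Y) (hx₀ : g x₀ ≠ ⊤)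
    (σ : ℝ≥0∞) (hσ0 : σ ≠ 0) (hσt : σ ≠ ⊤) :
    ∃ y, g y + σ * edist y x₀ ≤ g x₀ ∧ ∀ z, g y ≤ g z + σ * edist z y := by
  classical
  set F : Y → Set Y := fun w => {z | g z + σ * edist z w ≤ g w} with hF
  have hself : ∀ w, w ∈ F w := by
    intro w; simp [hF]
  set m : Y → ℝ≥0∞ := fun w => ⨅ z ∈ F w, g z with hm
  have hmle : ∀ w, m w ≤ g w := fun w => biInf_le g (hself w)
  have key : ∀ (n : ℕ) (w : Y), ∃ z, z ∈ F w ∧ g z ≤ m w + (2 : ℝ≥0∞)⁻¹ ^ n := by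
    intro n w
    rcases eq_or_ne (m w) ⊤ with h | h
    · exact ⟨w, hself w, by simp [h]⟩
    · have : m w < m w + (2 : ℝ≥0∞)⁻¹ ^ n :=
        ENNReal.lt_add_right h (pow_ne_zero _ (by simp))
      rw [hm] at this
      simp only [iInf_lt_iff] at this
      obtain ⟨z, hz, hz2⟩ := this
      exact ⟨z, hz, le_of_lt hz2⟩
  choose step hstep1 hstep2 using key
  set seq : ℕ → Y := fun n => Nat.rec x₀ (fun n w => step n w) n with hseq
  have hseq0 : seq 0 = x₀ := rfl
  have hseqS : ∀ n, seq (n + 1) = step n (seq n) := fun n => rfl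
  have hdec : ∀ n, g (seq (n + 1)) + σ * edist (seq (n + 1)) (seq n) ≤ g (seq n) := by
    intro n; rw [hseqS]; exact hstep1 n (seq n)
  have hmono : ∀ n, g (seq (n + 1)) ≤ g (seq n) :=
    fun n => le_trans le_self_add (hdec n)
  have hanti : ∀ {n k : ℕ}, n ≤ k → g (seq k) ≤ g (seq n) := by
    intro n k h
    induction k with
    | zero => rw [Nat.le_zero.mp h]
    | succ k ih =>
      rcases Nat.lt_or_ge n (k+1) with h' | h'
      · exact le_trans (hmono k) (ih (Nat.lt_succ_iff.mp h'))
      · rw [Nat.le_antisymm h h']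
  have hfin : ∀ n, g (seq n) ≤ g x₀ := fun n => hseq0 ▸ hanti (Nat.zero_le n)
  -- partial sums bounded
  have hsum : ∀ n, σ * ∑ k ∈ Finset.range n, edist (seq k) (seq (k+1)) + g (seq n) ≤ g x₀ := by
    intro n
    induction n with
    | zero => simp [hseq0]
    | succ n ih =>
      calc σ * ∑ k ∈ Finset.range (n+1), edist (seq k) (seq (k+1)) + g (seq (n+1))
          = σ * ∑ k ∈ Finset.range n, edist (seq k) (seq (k+1)) +
            (g (seq (n+1)) + σ * edist (seq n) (seq (n+1))) := by
            rw [Finset.sum_range_succ, mul_add]; ring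
        _ ≤ σ * ∑ k ∈ Finset.range n, edist (seq k) (seq (k+1)) + g (seq n) := by
            gcongr
            rw [edist_comm]; exact hdec n
        _ ≤ g x₀ := ih
  have htsum : ∑' k, edist (seq k) (seq (k+1)) ≠ ⊤ := by
    have hb : ∑' k, edist (seq k) (seq (k+1)) ≤ g x₀ / σ := by
      rw [ENNReal.tsum_eq_iSup_nat]
      refine iSup_le fun n => ?_
      rw [ENNReal.le_div_iff_mul_le (Or.inl hσ0) (Or.inl hσt), mul_comm]
      exact le_trans le_self_add (hsum n)
    exact ne_top_of_le_ne_top (ENNReal.div_lt_top hx₀ hσ0).ne hb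
  obtain ⟨y, hy⟩ := cauchySeq_tendsto_of_complete
    (cauchySeq_of_edist_le_of_tsum_ne_top _ (fun n => le_rfl) htsum)
  -- membership by transitivity
  have htrans : ∀ n k, n ≤ k → g (seq k) + σ * edist (seq k) (seq n) ≤ g (seq n) := by
    intro n k h
    induction k with
    | zero => rw [Nat.le_zero.mp h]; simp
    | succ k ih =>
      rcases Nat.lt_or_ge n (k+1) with h' | h'
      · have h'' := ih (Nat.lt_succ_iff.mp h')
        calc g (seq (k+1)) + σ * edist (seq (k+1)) (seq n)
            ≤ g (seq (k+1)) + σ * (edist (seq (k+1)) (seq k) + edist (seq k) (seq n)) := by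
              gcongr; exact edist_triangle _ _ _
          _ = (g (seq (k+1)) + σ * edist (seq (k+1)) (seq k)) + σ * edist (seq k) (seq n) := by
              rw [mul_add]; ring
          _ ≤ g (seq k) + σ * edist (seq k) (seq n) := by gcongr; exact hdec k
          _ ≤ g (seq n) := h''
      · simp [Nat.le_antisymm h h']
  have hclosed : ∀ w, IsClosed (F w) := by
    intro w
    have hlsc2 : LowerSemicontinuous (fun z => g z + σ * edist z w) :=
      hg.add (((ENNReal.continuous_const_mul hσt).comp
        (Continuous.edist continuous_id continuous_const)).lowerSemicontinuous)
    have := lowerSemicontinuous_iff_isOpen_preimage.mp hlsc2 (g w)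
    have : IsClosed ((fun z => g z + σ * edist z w) ⁻¹' Set.Iic (g w)) := by
      rw [← isOpen_compl_iff]
      convert this using 1
      ext z; simp
    exact this
  have hymem : ∀ n, g y + σ * edist y (seq n) ≤ g (seq n) := by
    intro n
    have : ∀ᶠ k in atTop, seq k ∈ F (seq n) :=
      eventually_atTop.mpr ⟨n, fun k hk => htrans n k hk⟩
    exact (hclosed (seq n)).mem_of_tendsto hy this
  refine ⟨y, by simpa [hseq0] using hymem 0, ?_⟩
  by_contra hcon
  push_neg at hcon
  obtain ⟨z, hz⟩ := hcon
  have hzF : ∀ n, z ∈ F (seq n) := by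
    intro n
    calc g z + σ * edist z (seq n)
        ≤ g z + σ * (edist z y + edist y (seq n)) := by gcongr; exact edist_triangle _ _ _
      _ = (g z + σ * edist z y) + σ * edist y (seq n) := by rw [mul_add]; ring
      _ ≤ g y + σ * edist y (seq n) := add_le_add_left (le_of_lt hz) _
      _ ≤ g (seq n) := hymem n
  have hzm : ∀ n, m (seq n) ≤ g z := fun n => biInf_le g (hzF n)
  have hyz : ∀ n, g y ≤ g z + (2:ℝ≥0∞)⁻¹ ^ n := by
    intro n
    have h1 : g y ≤ g (seq (n+1)) := le_trans le_self_add (hymem (n+1))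
    have h2 : g (seq (n+1)) ≤ m (seq n) + (2:ℝ≥0∞)⁻¹ ^ n := by
      rw [hseqS]; exact hstep2 n (seq n)
    exact h1.trans (h2.trans (add_le_add_left (hzm n) _))
  have hyz' : g y ≤ g z := by
    refine ENNReal.le_of_forall_pos_le_add fun ε hε _ => ?_
    obtain ⟨n, hn⟩ := ENNReal.exists_inv_two_pow_lt (by exact_mod_cast hε.ne' : (ε:ℝ≥0∞) ≠ 0)
    exact (hyz n).trans (add_le_add_right hn.le _)
  have h2 : g z + σ * edist z y < g y := hz
  exact absurd (le_trans hyz' le_self_add) (not_le.mpr h2)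

theorem stmt8 {X : Type*} [NormedAddCommGroup X] [NormedSpace ℝ X] [CompleteSpace X]
    (f : X → EReal) (hlsc : LowerSemicontinuous f)
    (α : ℝ) (β : EReal) (hαβ : (α : EReal) < β)
    (φ φ' : ℝ → ℝ) (hφ0 : φ 0 = 0)
    (hφcont : ContinuousOn φ {s : ℝ | 0 ≤ s ∧ (s : EReal) < β - (α : EReal)})
    (hφderiv : ∀ s : ℝ, 0 < s → (s : EReal) < β - (α : EReal) →
      HasDerivAt φ (φ' s) s ∧ 0 < φ' s)
    (hKL : ∀ x, (α : EReal) < f x → f x < β →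
      1 ≤ ENNReal.ofReal (φ' ((f x).toReal - α)) * strongSlope f x) :
    ∀ x, (α : EReal) < f x → f x < β →
      EMetric.infEdist x {y | f y ≤ (α : EReal)} ≤
        ENNReal.ofReal (φ ((f x).toReal - α)) := by
  classical
  -- basic EReal facts
  have hadd : ∀ s : ℝ, (s:EReal) < β - (α:EReal) → ((α + s : ℝ):EReal) < β := by
    intro s hs
    rw [EReal.lt_sub_iff_add_lt (Or.inl (EReal.coe_ne_bot α)) (Or.inl (EReal.coe_ne_top α))] at hs
    rw [EReal.coe_add, add_comm]
    exact hs
  have band : ∀ w : X, (α:EReal) < f w → f w < β →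
      f w ≠ ⊤ ∧ f w ≠ ⊥ ∧ 0 < (f w).toReal - α ∧ (((f w).toReal - α : ℝ) : EReal) < β - (α:EReal) := by
    intro w h1 h2
    have ht : f w ≠ ⊤ := (lt_of_lt_of_le h2 le_top).ne
    have hb : f w ≠ ⊥ := (lt_of_le_of_lt bot_le h1).ne'
    have hcoe : ((f w).toReal : EReal) = f w := EReal.coe_toReal ht hb
    have h1' : α < (f w).toReal := by
      rw [← hcoe] at h1; exact_mod_cast h1
    refine ⟨ht, hb, by linarith, ?_⟩
    rw [EReal.lt_sub_iff_add_lt (Or.inl (EReal.coe_ne_bot α)) (Or.inl (EReal.coe_ne_top α)),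
      ← EReal.coe_add, sub_add_cancel, hcoe]
    exact h2
  -- monotonicity of φ
  have hmono : ∀ s t : ℝ, 0 ≤ s → (t:EReal) < β - (α:EReal) → s < t → φ s < φ t := by
    intro s t hs htb hst
    have hsub : Set.Icc s t ⊆ {s:ℝ | 0 ≤ s ∧ (s:EReal) < β - (α:EReal)} := by
      intro x hx
      exact ⟨le_trans hs hx.1, lt_of_le_of_lt (by exact_mod_cast hx.2) htb⟩
    refine strictMonoOn_of_deriv_pos (convex_Icc s t) (hφcont.mono hsub) ?_
        (Set.left_mem_Icc.mpr hst.le) (Set.right_mem_Icc.mpr hst.le) hst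
    intro x hx
    rw [interior_Icc] at hx
    have hx0 : 0 < x := lt_of_le_of_lt hs hx.1
    have hxb : (x:EReal) < β - (α:EReal) := lt_of_le_of_lt (by exact_mod_cast hx.2.le) htb
    rw [(hφderiv x hx0 hxb).1.deriv]
    exact (hφderiv x hx0 hxb).2
  have hnonneg : ∀ s : ℝ, 0 ≤ s → (s:EReal) < β - (α:EReal) → 0 ≤ φ s := by
    intro s hs hsb
    rcases eq_or_lt_of_le hs with h | h
    · rw [← h, hφ0]
    · rw [← hφ0]; exact (hmono 0 s le_rfl hsb h).le
  have hpos : ∀ s : ℝ, 0 < s → (s:EReal) < β - (α:EReal) → 0 < φ s := by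
    intro s hs hsb; rw [← hφ0]; exact hmono 0 s le_rfl hsb hs
  have hmono' : ∀ s t : ℝ, 0 ≤ s → (t:EReal) < β - (α:EReal) → s ≤ t → φ s ≤ φ t := by
    intro s t hs htb hst
    rcases eq_or_lt_of_le hst with h | h
    · rw [h]
    · exact (hmono s t hs htb h).le
  -- the composed function g
  set L : ℝ≥0∞ := ⨆ s ∈ {s:ℝ | 0 ≤ s ∧ (s:EReal) < β - (α:EReal)}, ENNReal.ofReal (φ s) with hL
  set g : X → ℝ≥0∞ := fun w =>
    if f w ≤ (α:EReal) then 0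
    else if f w < β then ENNReal.ofReal (φ ((f w).toReal - α)) else L with hg
  have hgband : ∀ w, (α:EReal) < f w → f w < β →
      g w = ENNReal.ofReal (φ ((f w).toReal - α)) := by
    intro w h1 h2
    rw [hg]; simp only [not_le.mpr h1, if_false, if_pos h2, if_neg (not_le.mpr h1)]
  have hgmono : ∀ s : ℝ, 0 ≤ s → (s:EReal) < β - (α:EReal) →
      ∀ w, ((α + s:ℝ):EReal) < f w → ENNReal.ofReal (φ s) ≤ g w := by
    intro s hs0 hsb w hw
    by_cases h1 : f w ≤ (α:EReal)
    · have hαs : (α:EReal) ≤ ((α + s:ℝ):EReal) := by exact_mod_cast (by linarith : α ≤ α + s)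
      exact absurd (lt_of_le_of_lt hαs (lt_of_lt_of_le hw h1)) (lt_irrefl _)
    · by_cases h2 : f w < β
      · rw [hgband w (not_le.mp h1) h2]
        apply ENNReal.ofReal_le_ofReal
        obtain ⟨hwt, hwb, hw0, hwβ⟩ := band w (not_le.mp h1) h2
        refine hmono' s _ hs0 hwβ ?_
        have : ((α + s:ℝ):EReal) < ((f w).toReal : EReal) := by
          rw [EReal.coe_toReal hwt hwb]; exact hw
        have := EReal.coe_lt_coe_iff.mp this
        linarith
      · rw [hg]; simp only [if_neg h1, if_neg h2]
        exact le_iSup₂ (f := fun s (_ : s ∈ {s:ℝ | 0 ≤ s ∧ (s:EReal) < β - (α:EReal)}) =>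
          ENNReal.ofReal (φ s)) s ⟨hs0, hsb⟩
  -- lower semicontinuity of g
  have hglsc : LowerSemicontinuous g := by
    intro x0 c hc
    by_cases h1 : f x0 ≤ (α:EReal)
    · rw [hg] at hc; simp only [if_pos h1] at hc
      exact absurd hc (by simp)
    · by_cases h2 : f x0 < β
      · obtain ⟨ht, hb, hu0, hub⟩ := band x0 (not_le.mp h1) h2
        set u := (f x0).toReal - α with hu
        rw [hgband x0 (not_le.mp h1) h2] at hc
        have hIoo : Set.Ioo 0 u ⊆ {s:ℝ | 0 ≤ s ∧ (s:EReal) < β - (α:EReal)} :=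
          fun z hz => ⟨hz.1.le, lt_trans (by exact_mod_cast hz.2) hub⟩
        have hcont : ContinuousWithinAt φ {s:ℝ | 0 ≤ s ∧ (s:EReal) < β - (α:EReal)} u :=
          hφcont u ⟨hu0.le, hub⟩
        have htend : Filter.Tendsto (fun s => ENNReal.ofReal (φ s)) (𝓝[Set.Ioo 0 u] u)
            (𝓝 (ENNReal.ofReal (φ u))) :=
          (ENNReal.continuous_ofReal.tendsto (φ u)).comp ((hcont.mono hIoo).tendsto)
        have : (𝓝[Set.Ioo 0 u] u).NeBot := right_nhdsWithin_Ioo_neBot hu0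
        obtain ⟨s, hcs, hs⟩ := ((htend.eventually_const_lt hc).and eventually_mem_nhdsWithin).exists
        have hsb : (s:EReal) < β - (α:EReal) := lt_trans (by exact_mod_cast hs.2) hub
        have hfy : ∀ᶠ y in 𝓝 x0, ((α + s:ℝ):EReal) < f y := by
          apply hlsc x0
          rw [← EReal.coe_toReal ht hb]
          exact_mod_cast (by linarith [hs.2] : α + s < (f x0).toReal)
        exact hfy.mono fun y hy => lt_of_lt_of_le hcs (hgmono s hs.1.le hsb y hy)
      · rw [hg] at hc; simp only [if_neg h1, if_neg h2, hL, lt_iSup_iff] at hc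
        obtain ⟨s, hsP, hcs⟩ := hc
        have hfy : ∀ᶠ y in 𝓝 x0, ((α + s:ℝ):EReal) < f y :=
          hlsc x0 _ (lt_of_lt_of_le (hadd s hsP.2) (not_lt.mp h2))
        exact hfy.mono fun y hy => lt_of_lt_of_le hcs (hgmono s hsP.1 hsP.2 y hy)
  -- main argument
  intro x hxα hxβ
  obtain ⟨hxt, hxb, hux0, huxb⟩ := band x hxα hxβ
  set ux := (f x).toReal - α with hux
  set S : Set X := {y | f y ≤ (α:EReal)} with hS
  have hgx : g x = ENNReal.ofReal (φ ux) := hgband x hxα hxβ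
  by_contra hcon
  push_neg at hcon
  rw [← hgx] at hcon
  -- choose σ
  obtain ⟨σ, hσ1, hσ0, hσD⟩ : ∃ σ : ℝ≥0∞, σ < 1 ∧ σ ≠ 0 ∧ g x < σ * EMetric.infEdist x S := by
    rcases eq_or_ne (EMetric.infEdist x S) ⊤ with hD | hD
    · refine ⟨2⁻¹, by norm_num, by norm_num, ?_⟩
      rw [hD, ENNReal.mul_top (by norm_num)]
      rw [hgx]; exact ENNReal.ofReal_lt_top
    · have hD0 : EMetric.infEdist x S ≠ 0 := ((zero_le).trans_lt hcon).ne'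
      have h1 : g x / EMetric.infEdist x S < 1 := by
        rw [ENNReal.div_lt_iff (Or.inl hD0) (Or.inl hD), one_mul]
        exact hcon
      obtain ⟨σ, hσl, hσr⟩ := exists_between h1
      exact ⟨σ, hσr, ((zero_le).trans_lt hσl).ne',
        (ENNReal.div_lt_iff (Or.inl hD0) (Or.inl hD)).mp hσl⟩
  have hσt : σ ≠ ⊤ := (lt_of_lt_of_le hσ1 le_top).ne
  obtain ⟨y, hEk1, hEk2⟩ := ekeland_enn g hglsc x (by rw [hgx]; exact ENNReal.ofReal_ne_top)
    σ hσ0 hσt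
  have hyS : y ∉ S := by
    intro hyS
    have h1 : σ * edist y x ≤ g x := le_trans le_add_self hEk1
    have h2 : EMetric.infEdist x S ≤ edist y x := by
      rw [edist_comm]; exact EMetric.infEdist_le_edist_of_mem hyS
    exact absurd (le_trans (mul_le_mul_right h2 σ) h1) (not_le.mpr hσD)
  have hyα : (α:EReal) < f y := not_le.mp hyS
  have hgy_le : g y ≤ g x := le_trans le_self_add hEk1
  have hyβ : f y < β := by
    by_contra hyβ'
    have hgyL : g y = L := by rw [hg]; simp only [if_neg (not_le.mpr hyα), if_neg hyβ']
    obtain ⟨s', hs'1, hs'2⟩ := exists_between huxb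
    have hs't : s' ≠ ⊤ := (lt_of_lt_of_le hs'2 le_top).ne
    have hs'b : s' ≠ ⊥ := ((EReal.bot_lt_coe ux).trans hs'1).ne'
    lift s' to ℝ using ⟨hs't, hs'b⟩ with s''
    have hlt : ux < s'' := EReal.coe_lt_coe_iff.mp hs'1
    have hφlt : φ ux < φ s'' := hmono ux s'' hux0.le hs'2 hlt
    have hA : g x < ENNReal.ofReal (φ s'') := by
      rw [hgx]
      exact (ENNReal.ofReal_lt_ofReal_iff (hpos s'' (lt_trans hux0 hlt) hs'2)).mpr hφlt
    have hB : ENNReal.ofReal (φ s'') ≤ L :=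
      le_iSup₂ (f := fun s (_ : s ∈ {s:ℝ | 0 ≤ s ∧ (s:EReal) < β - (α:EReal)}) =>
        ENNReal.ofReal (φ s)) s'' ⟨(lt_trans hux0 hlt).le, hs'2⟩
    rw [hgyL] at hgy_le
    exact absurd (le_trans hB hgy_le) (not_le.mpr hA)
  obtain ⟨hyt, hyb, hv0, hvb⟩ := band y hyα hyβ
  set v := (f y).toReal - α with hv
  have hgy : g y = ENNReal.ofReal (φ v) := hgband y hyα hyβ
  set c := φ' v with hcdef
  have hder : HasDerivAt φ c v := (hφderiv v hv0 hvb).1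
  have hc : 0 < c := (hφderiv v hv0 hvb).2
  have hKLy := hKL y hyα hyβ
  have hnotmin : ¬ IsLocalMin f y := by
    intro hmin
    have hzero : strongSlope f y = 0 := by unfold strongSlope; rw [if_pos hmin]
    rw [hzero, mul_zero] at hKLy
    exact absurd hKLy (by simp)
  have hss : strongSlope f y =
      Filter.limsup (fun z => ENNReal.ofReal ((f y - f z).toReal / dist y z)) (𝓝[≠] y) := by
    unfold strongSlope; rw [if_neg hnotmin]
  -- numerical setup
  set σr := σ.toReal with hσr
  have hσr0 : 0 ≤ σr := ENNReal.toReal_nonneg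
  have hσr1 : σr < 1 := by
    have := (ENNReal.toReal_lt_toReal hσt (by simp : (1:ℝ≥0∞) ≠ ⊤)).mpr hσ1
    simpa using this
  have hσeq : ENNReal.ofReal σr = σ := ENNReal.ofReal_toReal hσt
  set δ := c * (1 - σr) / 2 with hδ
  have hδpos : 0 < δ := by
    have := mul_pos hc (by linarith : (0:ℝ) < 1 - σr)
    rw [hδ]; linarith
  have hcδ : 0 < c - δ := by
    have := mul_pos hc (by linarith : (0:ℝ) < 1 - σr)
    rw [hδ]; nlinarith
  set r := σr / (c - δ) with hr
  have hr0 : 0 ≤ r := div_nonneg hσr0 hcδ.le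
  have hrc : c * r < 1 := by
    rw [hr, mul_div_assoc', div_lt_one hcδ, hδ]
    nlinarith [mul_pos hc (by linarith : (0:ℝ) < 1 - σr)]
  -- little-o estimate
  have hlo := (hasDerivAt_iff_isLittleO.mp hder).def hδpos
  rw [Metric.eventually_nhds_iff] at hlo
  obtain ⟨η₁, hη₁, hlo⟩ := hlo
  set η := min (η₁/2) (v/2) with hη
  have hη0 : 0 < η := lt_min (by linarith) (by linarith)
  have hηv : η < v := lt_of_le_of_lt (min_le_right _ _) (by linarith)
  have hηη₁ : η < η₁ := lt_of_le_of_lt (min_le_left _ _) (by linarith)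
  have hvη0 : 0 < v - η := by linarith
  have hvηb : ((v - η:ℝ):EReal) < β - (α:EReal) := lt_trans (by exact_mod_cast (by linarith : v - η < v)) hvb
  have hkey : ∀ s : ℝ, v - η < s → s < v → (c - δ) * (v - s) ≤ φ v - φ s := by
    intro s h1 h2
    have hd : dist s v < η₁ := by
      rw [Real.dist_eq, abs_of_nonpos (by linarith)]
      linarith
    have h4 := hlo hd
    simp only [Real.norm_eq_abs, smul_eq_mul] at h4
    have h5 : |s - v| = v - s := by rw [abs_of_nonpos (by linarith)]; ring
    rw [h5] at h4
    have h6 := le_of_abs_le h4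
    nlinarith [h6]
  set m := φ v - φ (v - η) with hmdef
  have hm : 0 < m := sub_pos.mpr (hmono (v - η) v hvη0.le hvb (by linarith))
  set ρ := ENNReal.ofReal m / σ with hρ
  have hρ0 : 0 < ρ := ENNReal.div_pos (by simp [ENNReal.ofReal_eq_zero]; linarith) hσt
  -- the eventual bound
  have hev : ∀ᶠ z in 𝓝[≠] y, ENNReal.ofReal ((f y - f z).toReal / dist y z) ≤ ENNReal.ofReal r := by
    have hball : ∀ᶠ z in 𝓝 y, z ∈ EMetric.ball y ρ :=
      EMetric.isOpen_ball.eventually_mem (EMetric.mem_ball_self hρ0)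
    filter_upwards [eventually_nhdsWithin_of_eventually_nhds hball,
      eventually_mem_nhdsWithin] with z hzball hzne
    have hzy : z ≠ y := hzne
    have hdistpos : 0 < dist y z := dist_pos.mpr (Ne.symm hzy)
    have hzball' : edist z y < ρ := EMetric.mem_ball.mp hzball
    -- step 1 : f z cannot be too small
    have hstep1 : ((α + (v - η) : ℝ):EReal) < f z := by
      by_contra hle
      push_neg at hle
      have hgz : g z ≤ ENNReal.ofReal (φ (v - η)) := by
        by_cases h1 : f z ≤ (α:EReal)
        · rw [hg]; simp only [if_pos h1]; exact zero_le
        · have h2 : f z < β := lt_of_le_of_lt hle (hadd _ hvηb)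
          rw [hgband z (not_le.mp h1) h2]
          apply ENNReal.ofReal_le_ofReal
          obtain ⟨hzt', hzb', huz0, huzb⟩ := band z (not_le.mp h1) h2
          refine hmono' _ _ huz0.le hvηb ?_
          have : ((f z).toReal : EReal) ≤ ((α + (v - η):ℝ):EReal) := by
            rw [EReal.coe_toReal hzt' hzb']; exact hle
          have := EReal.coe_le_coe_iff.mp this
          linarith
      have h7 := hEk2 z
      rw [hgy] at h7
      have h8 : ENNReal.ofReal (φ v) ≤ ENNReal.ofReal (φ (v - η)) + σ * edist z y :=
        h7.trans (add_le_add_left hgz _)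
      have h9 : ENNReal.ofReal m ≤ σ * edist z y := by
        rw [hmdef, ENNReal.ofReal_sub _ (hnonneg (v - η) hvη0.le hvηb)]
        exact tsub_le_iff_left.mpr h8
      have h10 : ρ ≤ edist z y := by
        rw [hρ, ENNReal.div_le_iff_le_mul (Or.inl hσ0) (Or.inl hσt), mul_comm]
        exact h9
      exact absurd h10 (not_le.mpr hzball')
    rcases le_or_gt (f y) (f z) with hcase | hcase
    · -- numerator nonpositive
      have hnum : (f y - f z).toReal ≤ 0 := by
        rcases eq_or_ne (f z) ⊤ with h | h
        · rw [h, EReal.sub_top]; simp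
        · have hzb' : f z ≠ ⊥ := (lt_of_le_of_lt bot_le (lt_of_lt_of_le hyα hcase)).ne'
          rw [EReal.toReal_sub hyt hyb h hzb']
          have := EReal.toReal_le_toReal hcase hyb h
          linarith
      have : (f y - f z).toReal / dist y z ≤ 0 :=
        div_nonpos_iff.mpr (Or.inr ⟨hnum, dist_nonneg⟩)
      rw [ENNReal.ofReal_eq_zero.mpr this]
      exact zero_le
    · -- f z < f y
      have hzt : f z ≠ ⊤ := (lt_of_lt_of_le (hcase.trans hyβ) le_top).ne
      have hzb : f z ≠ ⊥ := ((EReal.bot_lt_coe _).trans hstep1).ne'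
      set w := (f z).toReal - α with hwdef
      have hw1 : v - η < w := by
        have : ((α + (v - η):ℝ):EReal) < ((f z).toReal : EReal) := by
          rw [EReal.coe_toReal hzt hzb]; exact hstep1
        have := EReal.coe_lt_coe_iff.mp this
        rw [hwdef]; linarith
      have hw2 : w < v := by
        have : ((f z).toReal : EReal) < ((f y).toReal : EReal) := by
          rw [EReal.coe_toReal hzt hzb, EReal.coe_toReal hyt hyb]; exact hcase
        have := EReal.coe_lt_coe_iff.mp this
        rw [hwdef, hv]; linarith
      have hαz : (α:EReal) < f z := by
        have h0 : (α:EReal) ≤ ((α + (v - η):ℝ):EReal) := by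
          exact_mod_cast (by linarith : α ≤ α + (v - η))
        exact lt_of_le_of_lt h0 hstep1
      have hgz : g z = ENNReal.ofReal (φ w) := hgband z hαz (hcase.trans hyβ)
      have h7 := hEk2 z
      rw [hgy, hgz] at h7
      have hwP0 : 0 < w := lt_trans hvη0 hw1
      have hwPb : ((w:ℝ):EReal) < β - (α:EReal) :=
        lt_trans (by exact_mod_cast hw2) hvb
      have h8 : ENNReal.ofReal (φ v - φ w) ≤ σ * edist z y := by
        rw [ENNReal.ofReal_sub _ (hnonneg w hwP0.le hwPb)]
        exact tsub_le_iff_left.mpr h7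
      have h9 : σ * edist z y = ENNReal.ofReal (σr * dist z y) := by
        rw [edist_dist, ← hσeq, ← ENNReal.ofReal_mul hσr0]
      rw [h9] at h8
      have h10 : φ v - φ w ≤ σr * dist z y :=
        (ENNReal.ofReal_le_ofReal_iff (by positivity)).mp h8
      have h11 := hkey w hw1 hw2
      have h12 : v - w ≤ r * dist y z := by
        rw [dist_comm y z, hr, div_mul_eq_mul_div, le_div_iff₀ hcδ, mul_comm (v - w) (c - δ)]
        exact h11.trans h10
      have h13 : (f y - f z).toReal = v - w := by
        rw [EReal.toReal_sub hyt hyb hzt hzb, hv, hwdef]; ring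
      rw [h13]
      apply ENNReal.ofReal_le_ofReal
      rw [div_le_iff₀ hdistpos]
      exact h12
  have hls : strongSlope f y ≤ ENNReal.ofReal r := by
    rw [hss]
    exact Filter.limsup_le_of_le (by isBoundedDefault) hev
  have hfinal : (1:ℝ≥0∞) < 1 := by
    refine lt_of_le_of_lt (hKLy.trans (mul_le_mul_right hls _)) ?_
    rw [← ENNReal.ofReal_mul hc.le]
    exact ENNReal.ofReal_lt_one.mpr hrc
  exact absurd hfinal (lt_irrefl _)
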